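/- Suppose bigness is given by principal filters: B ⊆ A is big iff μ(A) ⊆ B ⊆ A. Then (S*3) [for every big A ⊆ Σ there is a big B ⊆ Π'×Σ'' with B↾X'' ⊆ A↾X''] holds iff (μ*3) [μ(Π'×Σ'')↾X'' ⊆ μ(Σ)↾X''] holds, for all Σ, where Σ'' := Σ↾X'' and Π' is the full product over X'. -/

import Mathlib

/-- with bigness given by principal filters (`B ⊆ A` is big iff
`μ(A) ⊆ B ⊆ A`), the rule (S*3) [for every big `A ⊆ Σ` there is a big
`B ⊆ Π'×Σ''` with `B↾X'' ⊆ A↾X''`] holds for all `Σ, A` iff the rule (μ*3)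
[`μ(Π'×Σ'')↾X'' ⊆ μ(Σ)↾X''`] holds for all `Σ`.  Full sequences are pairs in
`α × β`; `Π'` is the full product over `X'` (all of `α`), `Σ'' = Σ↾X''` is the
image under the second projection. -/
theorem S3_iff_mu3
    {α β : Type*}
    (μ : Set (α × β) → Set (α × β)) (hμ : ∀ A, μ A ⊆ A) :
    ((∀ (S A : Set (α × β)), A ⊆ S → μ S ⊆ A →
        ∃ B : Set (α × β), B ⊆ Set.univ ×ˢ (Prod.snd '' S) ∧
          μ (Set.univ ×ˢ (Prod.snd '' S)) ⊆ B ∧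
          Prod.snd '' B ⊆ Prod.snd '' A)
      ↔ (∀ S : Set (α × β),
          Prod.snd '' μ (Set.univ ×ˢ (Prod.snd '' S)) ⊆ Prod.snd '' μ S)) := by
  constructor
  · intro h S
    obtain ⟨B, hB1, hB2, hB3⟩ := h S (μ S) (hμ S) subset_rfl
    exact fun y hy => hB3 (Set.image_mono hB2 hy)
  · intro h S A hAS hmu
    refine ⟨(Set.univ ×ˢ (Prod.snd '' S)) ∩ {x | x.2 ∈ Prod.snd '' A}, Set.inter_subset_left, ?_, ?_⟩
    · intro x hx
      exact ⟨hμ _ hx, (Set.image_mono hmu) (h S ⟨x, hx, rfl⟩)⟩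
    · rintro y ⟨x, ⟨_, hx2⟩, rfl⟩
      exact hx2
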